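/- A vector field on Euclidean space with everywhere symmetric derivative is a gradient: let V : EuclideanSpace ℝ (Fin k) → EuclideanSpace ℝ (Fin k) be continuously differentiable (ContDiff ℝ 1) and suppose that for all x, u, w one has ⟪(fderiv ℝ V x) u, w⟫ = ⟪(fderiv ℝ V x) w, u⟫. Then there exists a differentiable function f : EuclideanSpace ℝ (Fin k) → ℝ such that gradient f x = V x for all x. -/

import Mathlib

set_option synthInstance.maxHeartbeats 1000000
set_option maxHeartbeats 1000000

open scoped RealInnerProductSpace

open Set MeasureTheory intervalIntegral

lemma symm_deriv_isGradient_aux {E : Type*} [NormedAddCommGroup E] [InnerProductSpace ℝ E]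
    [FiniteDimensional ℝ E] (V : E → E) (hV : ContDiff ℝ 1 V)
    (hsymm : ∀ x u w : E, ⟪(fderiv ℝ V x) u, w⟫ = ⟪(fderiv ℝ V x) w, u⟫) :
    ∃ f : E → ℝ, Differentiable ℝ f ∧ ∀ x : E, gradient f x = V x := by
  have hVd : Differentiable ℝ V := hV.differentiable one_ne_zero
  have hVc : Continuous V := hVd.continuous
  have hDVc : Continuous (fderiv ℝ V) := hV.continuous_fderiv one_ne_zero
  set f : E → ℝ := fun x => ∫ t in (0:ℝ)..1, ⟪V (t • x), x⟫ with hf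
  set F' : E → ℝ → (E →L[ℝ] ℝ) := fun x t =>
    t • ((innerSL ℝ x).comp (fderiv ℝ V (t • x))) + innerSL ℝ (V (t • x)) with hF'
  have hFderiv : ∀ (x : E) (t : ℝ),
      HasFDerivAt (fun y => ⟪V (t • y), y⟫) (F' x t) x := by
    intro x t
    have h1 : HasFDerivAt (fun y : E => t • y) (t • ContinuousLinearMap.id ℝ E) x :=
      (hasFDerivAt_id x).const_smul t
    have h2 : HasFDerivAt (fun y : E => V (t • y))
        ((fderiv ℝ V (t • x)).comp (t • ContinuousLinearMap.id ℝ E)) x :=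
      (hVd (t • x)).hasFDerivAt.comp x h1
    have h3 := h2.inner ℝ (hasFDerivAt_id x)
    refine h3.congr_fderiv ?_
    ext v
    simp [F', real_inner_smul_right, real_inner_comm]
    ring
  have key : ∀ x : E, HasGradientAt f (V x) x := by
    intro x₀
    rw [hasGradientAt_iff_hasFDerivAt]
    set R : ℝ := ‖x₀‖ + 1 with hR
    have hR0 : (0:ℝ) ≤ R := by positivity
    obtain ⟨C₁, hC₁⟩ :=
      (isCompact_closedBall (0 : E) R).exists_bound_of_continuousOn hVc.continuousOn
    obtain ⟨C₂, hC₂⟩ :=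
      (isCompact_closedBall (0 : E) R).exists_bound_of_continuousOn hDVc.continuousOn
    set Cb : ℝ := R * C₂ + C₁ with hCb
    have hball : ∀ x ∈ Metric.ball x₀ 1, ∀ t : ℝ, t ∈ Set.uIoc (0:ℝ) 1 →
        ‖F' x t‖ ≤ Cb := by
      intro x hx t ht
      rw [Set.uIoc_of_le (by norm_num)] at ht
      have habs : |t| ≤ 1 := abs_le.mpr ⟨by linarith [ht.1.le], ht.2⟩
      have hxR : ‖x‖ ≤ R := by
        have := norm_sub_norm_le x x₀
        have hxd : ‖x - x₀‖ < 1 := by simpa [Metric.mem_ball, dist_eq_norm] using hx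
        linarith
      have htx : t • x ∈ Metric.closedBall (0 : E) R := by
        simp only [Metric.mem_closedBall, dist_zero_right, norm_smul]
        calc |t| * ‖x‖ ≤ 1 * ‖x‖ :=
              mul_le_mul_of_nonneg_right habs (norm_nonneg x)
          _ ≤ R := by simpa using hxR
      have h2 := hC₂ _ htx
      have h1 := hC₁ _ htx
      calc ‖F' x t‖ ≤ ‖t • ((innerSL ℝ x).comp (fderiv ℝ V (t • x)))‖
            + ‖innerSL ℝ (V (t • x))‖ := norm_add_le _ _
        _ ≤ |t| * (‖x‖ * ‖fderiv ℝ V (t • x)‖) + ‖V (t • x)‖ := by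
            gcongr
            · calc ‖t • ((innerSL ℝ x).comp (fderiv ℝ V (t • x)))‖
                  ≤ ‖t‖ * ‖(innerSL ℝ x).comp (fderiv ℝ V (t • x))‖ := ContinuousLinearMap.opNorm_smul_le _ _
                _ ≤ |t| * (‖x‖ * ‖fderiv ℝ V (t • x)‖) := by
                    rw [Real.norm_eq_abs]
                    gcongr
                    exact ((innerSL ℝ x).opNorm_comp_le _).trans
                      (by gcongr; exact le_of_eq (innerSL_apply_norm (𝕜 := ℝ) x))
            · exact le_of_eq (innerSL_apply_norm (𝕜 := ℝ) _)
        _ ≤ 1 * (R * C₂) + C₁ := by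
            have hA : |t| * (‖x‖ * ‖fderiv ℝ V (t • x)‖) ≤ 1 * (R * C₂) :=
              mul_le_mul habs (mul_le_mul hxR h2 (norm_nonneg _) hR0) (by positivity) one_pos.le
            linarith
        _ = Cb := by ring
    have hcont : ∀ x : E, Continuous fun t : ℝ => (⟪V (t • x), x⟫ : ℝ) := fun x =>
      (hVc.comp (continuous_id.smul continuous_const)).inner continuous_const
    have hcontF' : Continuous (F' x₀) := by
      apply Continuous.add
      · exact continuous_id.smul
          (((ContinuousLinearMap.compL ℝ E E ℝ (innerSL ℝ x₀)).continuous).comp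
            (hDVc.comp (continuous_id.smul continuous_const)))
      · exact (innerSL ℝ).continuous.comp (hVc.comp (continuous_id.smul continuous_const))
    have hmain :
        HasFDerivAt (fun x => ∫ t in (0:ℝ)..1, ⟪V (t • x), x⟫)
          (∫ t in (0:ℝ)..1, F' x₀ t) x₀ := by
      apply intervalIntegral.hasFDerivAt_integral_of_dominated_of_fderiv_le
        (s := Metric.ball x₀ 1) (bound := fun _ => Cb) (Metric.ball_mem_nhds x₀ one_pos)
      · filter_upwards with x
        exact (hcont x).aestronglyMeasurable
      · exact (hcont x₀).intervalIntegrable 0 1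
      · exact hcontF'.aestronglyMeasurable
      · filter_upwards with t ht x hx
        exact hball x hx t ht
      · exact intervalIntegrable_const
      · filter_upwards with t _ x _
        exact hFderiv x t
    have hint : IntervalIntegrable (F' x₀) volume 0 1 :=
      hcontF'.intervalIntegrable 0 1
    have heq : (∫ t in (0:ℝ)..1, F' x₀ t) = InnerProductSpace.toDual ℝ E (V x₀) := by
      ext v
      rw [ContinuousLinearMap.intervalIntegral_apply hint v]
      have hgderiv : ∀ t : ℝ,
          HasDerivAt (fun t : ℝ => t * ⟪V (t • x₀), v⟫) (F' x₀ t v) t := by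
        intro t
        have hsm : HasDerivAt (fun t : ℝ => t • x₀) x₀ t := by
          simpa using (hasDerivAt_id t).smul_const x₀
        have hVt : HasDerivAt (fun t : ℝ => V (t • x₀)) ((fderiv ℝ V (t • x₀)) x₀) t :=
          (hVd (t • x₀)).hasFDerivAt.comp_hasDerivAt t hsm
        have hin : HasDerivAt (fun t : ℝ => (⟪V (t • x₀), v⟫ : ℝ))
            (⟪(fderiv ℝ V (t • x₀)) x₀, v⟫) t := by
          have := (innerSL ℝ v).hasFDerivAt.comp_hasDerivAt t hVt
          have h2 := hVt.inner ℝ (hasDerivAt_const t v)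
          simpa using h2
        have := (hasDerivAt_id t).mul hin
        refine this.congr_deriv ?_
        simp only [F', ContinuousLinearMap.add_apply, ContinuousLinearMap.smul_apply,
          ContinuousLinearMap.coe_comp', Function.comp_apply, innerSL_apply_apply, smul_eq_mul]
        have hs : (inner ℝ x₀ ((fderiv ℝ V (t • x₀)) v) : ℝ)
            = inner ℝ ((fderiv ℝ V (t • x₀)) x₀) v := by
          rw [real_inner_comm]; exact hsymm _ v x₀
        rw [hs]
        simp only [id_eq]
        ring
      have hintg : IntervalIntegrable (fun t => F' x₀ t v) volume 0 1 :=
        (hcontF'.clm_apply continuous_const).intervalIntegrable 0 1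
      rw [intervalIntegral.integral_eq_sub_of_hasDerivAt (fun t _ => hgderiv t) hintg]
      simp [InnerProductSpace.toDual_apply_apply]
    rw [hf]
    rw [heq] at hmain
    exact hmain
  exact ⟨f, fun x => ((key x).hasFDerivAt).differentiableAt,
    fun x => (key x).gradient⟩

/-- A `C¹` vector field on Euclidean space whose derivative is everywhere symmetric
is a gradient: there is a differentiable `f : ℝ^k → ℝ` with `gradient f = V`. -/
theorem symm_deriv_vectorField_isGradient (k : ℕ)
    (V : EuclideanSpace ℝ (Fin k) → EuclideanSpace ℝ (Fin k))
    (hV : ContDiff ℝ 1 V)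
    (hsymm : ∀ x u w : EuclideanSpace ℝ (Fin k),
      ⟪(fderiv ℝ V x) u, w⟫ = ⟪(fderiv ℝ V x) w, u⟫) :
    ∃ f : EuclideanSpace ℝ (Fin k) → ℝ, Differentiable ℝ f ∧
      ∀ x : EuclideanSpace ℝ (Fin k), gradient f x = V x :=
  symm_deriv_isGradient_aux V hV hsymm
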